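/- Let T be an infinite rooted tree with root o, let I(x) ≥ 0 be a unit flow on T (I(o)=1 and I(x) = Σ_{y child of x} I(y)), and let h : V(T) → (0,1] satisfy h(o) = 1 and h(x) ≤ h(x̂) for all x ≠ o (x̂ the parent of x). Then for every n, Σ_{x,y ∈ Tₙ} I(x)I(y)/h(x∧y) = 1 + Σ_{u: 0<|u|≤n} I(u)² (1/h(u) − 1/h(û)), where x∧y is the most recent common ancestor of x and y and Tₙ is the n-th level. -/

import Mathlib

open Finset

/-- A locally finite infinite rooted tree, described by its vertex set,
root, parent function, depth function and (finite, nonempty) levels. -/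
structure LFRootedTree where
  V : Type
  decEq : DecidableEq V
  root : V
  parent : V → V
  depth : V → ℕ
  lev : ℕ → Finset V
  mem_lev : ∀ n x, x ∈ lev n ↔ depth x = n
  depth_root : depth root = 0
  eq_root_of_depth_zero : ∀ x, depth x = 0 → x = root
  depth_parent : ∀ x, x ≠ root → depth (parent x) + 1 = depth x
  parent_iterate_depth : ∀ x, parent^[depth x] x = root
  lev_nonempty : ∀ n, (lev n).Nonempty

attribute [instance] LFRootedTree.decEq

namespace LFRootedTree

variable (T : LFRootedTree)

/-- The children of a vertex `x`. -/
def children (x : T.V) : Finset T.V :=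
  (T.lev (T.depth x + 1)).filter (fun y => T.parent y = x)

/-- A unit flow from the root to infinity. -/
def IsUnitFlow (θ : T.V → ℝ) : Prop :=
  (∀ x, 0 ≤ θ x) ∧ θ T.root = 1 ∧ ∀ x, θ x = ∑ y ∈ T.children x, θ y

/-- The most recent common ancestor `x ∧ y` of two vertices: the common
iterated parent of `x` and `y` furthest from the root. -/
noncomputable def mca (x y : T.V) : T.V := by
  classical
  exact if h : ∃ k, T.parent^[k] x = T.parent^[k] y
    then T.parent^[Nat.find h] x else x

end LFRootedTree

namespace LFRootedTree

variable (T : LFRootedTree)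

lemma lev_zero : T.lev 0 = {T.root} := by
  ext x
  simp only [T.mem_lev, Finset.mem_singleton]
  exact ⟨T.eq_root_of_depth_zero x, fun hx => hx ▸ T.depth_root⟩

lemma mem_children {a x : T.V} : x ∈ T.children a ↔ T.depth x = T.depth a + 1 ∧ T.parent x = a := by
  simp [children, T.mem_lev]

lemma lev_succ (n : ℕ) : T.lev (n + 1) = (T.lev n).biUnion T.children := by
  ext x
  simp only [T.mem_lev, Finset.mem_biUnion]
  constructor
  · intro hx
    have hxr : x ≠ T.root := by
      intro hr; rw [hr, T.depth_root] at hx; exact Nat.succ_ne_zero n hx.symm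
    have hp := T.depth_parent x hxr
    exact ⟨T.parent x, by omega, T.mem_children.mpr ⟨by omega, rfl⟩⟩
  · rintro ⟨a, ha, hx⟩
    have := T.mem_children.mp hx
    omega

lemma children_pd (s : Finset T.V) : (↑s : Set T.V).PairwiseDisjoint T.children := by
  intro a _ b _ hab
  refine Finset.disjoint_left.mpr fun x hxa hxb => hab ?_
  rw [← (T.mem_children.mp hxa).2, (T.mem_children.mp hxb).2]

lemma mca_eq_of (x y : T.V) (k : ℕ) (hk : T.parent^[k] x = T.parent^[k] y)
    (hmin : ∀ j < k, T.parent^[j] x ≠ T.parent^[j] y) : T.mca x y = T.parent^[k] x := by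
  classical
  have hex : ∃ m, T.parent^[m] x = T.parent^[m] y := ⟨k, hk⟩
  unfold mca
  rw [dif_pos hex]
  have : Nat.find hex = k :=
    le_antisymm (Nat.find_le hk) (not_lt.1 fun hlt => hmin _ hlt (Nat.find_spec hex))
  rw [this]

lemma mca_self (x : T.V) : T.mca x x = x :=
  T.mca_eq_of x x 0 rfl (by omega)

lemma ne_root_of_depth_eq {x y : T.V} (hd : T.depth x = T.depth y) (hne : x ≠ y) : x ≠ T.root := by
  intro hr
  apply hne
  rw [hr]
  exact (T.eq_root_of_depth_zero y (by rw [← hd, hr, T.depth_root])).symm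

lemma mca_parent {x y : T.V} (hd : T.depth x = T.depth y) (hne : x ≠ y) :
    T.mca x y = T.mca (T.parent x) (T.parent y) := by
  classical
  have hxr : x ≠ T.root := T.ne_root_of_depth_eq hd hne
  have hyr : y ≠ T.root := T.ne_root_of_depth_eq hd.symm hne.symm
  have hdx := T.depth_parent x hxr
  have hdy := T.depth_parent y hyr
  have hdp : T.depth (T.parent x) = T.depth (T.parent y) := by omega
  have hex' : ∃ m, T.parent^[m] (T.parent x) = T.parent^[m] (T.parent y) := by
    refine ⟨T.depth (T.parent x), ?_⟩
    rw [T.parent_iterate_depth, hdp, T.parent_iterate_depth]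
  set k := Nat.find hex' with hkdef
  have hks : T.parent^[k] (T.parent x) = T.parent^[k] (T.parent y) := Nat.find_spec hex'
  have hkmin : ∀ j < k, T.parent^[j] (T.parent x) ≠ T.parent^[j] (T.parent y) :=
    fun j hj => Nat.find_min hex' hj
  have h1 : T.mca (T.parent x) (T.parent y) = T.parent^[k] (T.parent x) :=
    T.mca_eq_of _ _ k hks hkmin
  have h2 : T.mca x y = T.parent^[k + 1] x := by
    refine T.mca_eq_of x y (k + 1) ?_ ?_
    · rw [Function.iterate_succ_apply, Function.iterate_succ_apply]; exact hks
    · intro j hj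
      cases j with
      | zero => simpa using hne
      | succ m =>
        rw [Function.iterate_succ_apply, Function.iterate_succ_apply]
        exact hkmin m (by omega)
  rw [h1, h2, Function.iterate_succ_apply]

end LFRootedTree

lemma LFRT_inner_sum (T : LFRootedTree) (I : T.V → ℝ) (hflow : ∀ x, I x = ∑ y ∈ T.children x, I y)
    (h : T.V → ℝ) (a b : T.V) (hdab : T.depth a = T.depth b) :
    ∑ x ∈ T.children a, ∑ y ∈ T.children b, I x * I y / h (T.mca x y)
      = I a * I b / h (T.mca a b)
        + (if a = b then ∑ x ∈ T.children a, I x ^ 2 * (1 / h x - 1 / h a) else 0) := by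
  classical
  by_cases hab : a = b
  · subst hab
    rw [if_pos rfl, T.mca_self]
    have key : ∀ x ∈ T.children a,
        ∑ y ∈ T.children a, I x * I y / h (T.mca x y)
          = I x ^ 2 / h x + (I x * I a - I x ^ 2) / h a := by
      intro x hx
      have hx' := T.mem_children.mp hx
      have hstep : ∀ y ∈ (T.children a).erase x,
          I x * I y / h (T.mca x y) = I x * I y / h a := by
        intro y hy
        have hyx : y ≠ x := (Finset.mem_erase.mp hy).1
        have hy' := T.mem_children.mp (Finset.mem_erase.mp hy).2
        have : T.mca x y = a := by
          rw [T.mca_parent (by omega) (Ne.symm hyx), hx'.2, hy'.2, T.mca_self]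
        rw [this]
      rw [← Finset.add_sum_erase _ _ hx, T.mca_self, Finset.sum_congr rfl hstep,
        ← Finset.sum_div, ← Finset.mul_sum, Finset.sum_erase_eq_sub hx, ← hflow a]
      ring
    rw [Finset.sum_congr rfl key, Finset.sum_add_distrib, ← Finset.sum_div,
      Finset.sum_sub_distrib, ← Finset.sum_mul, ← hflow a]
    have hrw : ∑ x ∈ T.children a, I x ^ 2 * (1 / h x - 1 / h a)
        = (∑ x ∈ T.children a, I x ^ 2 / h x) - (∑ x ∈ T.children a, I x ^ 2) / h a := by
      rw [Finset.sum_div, ← Finset.sum_sub_distrib]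
      exact Finset.sum_congr rfl fun x _ => by ring
    rw [hrw]
    ring
  · rw [if_neg hab, add_zero]
    have key : ∀ x ∈ T.children a, ∀ y ∈ T.children b, T.mca x y = T.mca a b := by
      intro x hx y hy
      have hx' := T.mem_children.mp hx
      have hy' := T.mem_children.mp hy
      have hxy : x ≠ y := fun hxyeq => hab (by rw [← hx'.2, hxyeq, hy'.2])
      rw [T.mca_parent (by omega) hxy, hx'.2, hy'.2]
    rw [Finset.sum_congr rfl fun x hx => Finset.sum_congr rfl fun y hy => by
      rw [key x hx y hy]]
    simp only [← Finset.sum_div]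
    rw [← Finset.sum_mul_sum, ← hflow a, ← hflow b]

/-- **The key combinatorial identity.**  Let `I` be a unit flow on an infinite
rooted tree and `h` a positive function on the vertices with `h(o) = 1`,
`0 < h ≤ 1`, and `h(x) ≤ h(x̂)` for `x ≠ o`.  Then for every `n`,
`∑_{x,y ∈ Tₙ} I(x)I(y)/h(x∧y)
  = 1 + ∑_{0<|u|≤n} I(u)² (1/h(u) − 1/h(û))`. -/
theorem flow_harmonic_identity (T : LFRootedTree)
    (I : T.V → ℝ) (hI : T.IsUnitFlow I)
    (h : T.V → ℝ) (hpos : ∀ x, 0 < h x) (hle1 : ∀ x, h x ≤ 1)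
    (hroot : h T.root = 1)
    (hmono : ∀ x, x ≠ T.root → h x ≤ h (T.parent x)) (n : ℕ) :
    ∑ x ∈ T.lev n, ∑ y ∈ T.lev n, I x * I y / h (T.mca x y)
      = 1 + ∑ k ∈ Finset.Icc 1 n, ∑ u ∈ T.lev k,
          I u ^ 2 * (1 / h u - 1 / h (T.parent u)) := by
  classical
  obtain ⟨-, hr1, hflow⟩ := hI
  induction n with
  | zero => simp [T.lev_zero, T.mca_self, hroot, hr1]
  | succ n ih =>
    have hpd := T.children_pd (T.lev n)
    rw [Finset.sum_Icc_succ_top (by omega : 1 ≤ n + 1), ← add_assoc, ← ih]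
    rw [T.lev_succ]
    simp only [Finset.sum_biUnion hpd]
    have step1 : ∀ a ∈ T.lev n,
        (∑ x ∈ T.children a, ∑ b ∈ T.lev n, ∑ y ∈ T.children b,
            I x * I y / h (T.mca x y))
          = ∑ b ∈ T.lev n, (I a * I b / h (T.mca a b)
              + if a = b then ∑ x ∈ T.children a, I x ^ 2 * (1 / h x - 1 / h a) else 0) := by
      intro a ha
      rw [Finset.sum_comm]
      refine Finset.sum_congr rfl fun b hb => ?_
      exact LFRT_inner_sum T I hflow h a b (by
        rw [T.mem_lev] at ha hb; omega)
    rw [Finset.sum_congr rfl step1]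
    simp only [Finset.sum_add_distrib]
    have step2 : ∀ a ∈ T.lev n,
        (∑ b ∈ T.lev n, if a = b then
            ∑ x ∈ T.children a, I x ^ 2 * (1 / h x - 1 / h a) else 0)
          = ∑ u ∈ T.children a, I u ^ 2 * (1 / h u - 1 / h (T.parent u)) := by
      intro a ha
      rw [Finset.sum_ite_eq (T.lev n) a _, if_pos ha]
      exact Finset.sum_congr rfl fun u hu => by rw [(T.mem_children.mp hu).2]
    rw [Finset.sum_congr rfl step2]
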